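/- Let d ≥ 1. Let c : ℝ^d → ℝ be Lipschitz with Lipschitz constant M, let G : ℝ^d → ℝ be measurable with A := ∫_{ℝ^d} |z|·|G(z)| dz < ∞, and let h ∈ L²(ℝ^d). Then the function F(x) := ∫_{ℝ^d} G(x−y)·(c(x) − c(y))·h(y) dy is well defined for almost every x, belongs to L²(ℝ^d), and satisfies ‖F‖_{L²} ≤ M·A·‖h‖_{L²}. -/

import Mathlib

open MeasureTheory
open scoped ENNReal

/-- First-order commutator estimate: if `c` is Lipschitz with constant `M`,
`A = ∫ |z|·|G(z)| dz < ∞` and `h ∈ L²`, then the commutator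
`F(x) = ∫ G(x−y)(c(x)−c(y))h(y) dy` belongs to `L²` with `‖F‖_{L²} ≤ M·A·‖h‖_{L²}`. -/
theorem commutator_first_order_L2 (d : ℕ) (hd : 1 ≤ d)
    (c : EuclideanSpace ℝ (Fin d) → ℝ) (M : ℝ) (hM : 0 ≤ M)
    (hc : ∀ x y, |c x - c y| ≤ M * ‖x - y‖)
    (G : EuclideanSpace ℝ (Fin d) → ℝ) (hGm : Measurable G)
    (hGA : Integrable (fun z => ‖z‖ * |G z|))
    (h : EuclideanSpace ℝ (Fin d) → ℝ) (hh : MemLp h 2 volume) :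
    MemLp (fun x => ∫ y, G (x - y) * (c x - c y) * h y) 2 volume ∧
    eLpNorm (fun x => ∫ y, G (x - y) * (c x - c y) * h y) 2 volume
      ≤ ENNReal.ofReal (M * ∫ z, ‖z‖ * |G z|) * eLpNorm h 2 volume := by
  set μ : Measure (EuclideanSpace ℝ (Fin d)) := volume with hμ
  set F : EuclideanSpace ℝ (Fin d) → ℝ := fun x => ∫ y, G (x - y) * (c x - c y) * h y with hF
  set K : EuclideanSpace ℝ (Fin d) → ℝ≥0∞ := fun z => ENNReal.ofReal (M * (‖z‖ * |G z|)) with hK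
  have hKmeas : Measurable K := by
    rw [hK]
    exact ((measurable_norm.mul hGm.abs).const_mul M).ennreal_ofReal
  set IK : ℝ≥0∞ := ∫⁻ z, K z ∂μ with hIKdef
  have hIK : IK = ENNReal.ofReal (M * ∫ z, ‖z‖ * |G z|) := by
    rw [hIKdef, ← ofReal_integral_eq_lintegral_ofReal (hGA.const_mul M)
      (Filter.Eventually.of_forall fun z => by positivity), integral_const_mul]
  have hIKlt : IK < ∞ := by
    rw [hIK]; exact ENNReal.ofReal_lt_top
  -- continuity of c
  have hcc : Continuous c := by
    have : LipschitzWith M.toNNReal c := by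
      refine LipschitzWith.of_dist_le_mul fun x y => ?_
      rw [Real.dist_eq, dist_eq_norm]
      exact (hc x y).trans (by rw [Real.coe_toNNReal M hM])
    exact this.continuous
  -- a.e. strong measurability of F
  have hFm : AEStronglyMeasurable F μ := by
    have h1 : AEStronglyMeasurable (fun p : EuclideanSpace ℝ (Fin d) × EuclideanSpace ℝ (Fin d) => G (p.1 - p.2) * (c p.1 - c p.2) * h p.2)
        (μ.prod μ) := by
      refine AEStronglyMeasurable.mul (AEStronglyMeasurable.mul ?_ ?_) (hh.1.comp_snd)
      · exact (hGm.comp (measurable_fst.sub measurable_snd)).aestronglyMeasurable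
      · exact ((hcc.measurable.comp measurable_fst).sub
          (hcc.measurable.comp measurable_snd)).aestronglyMeasurable
    exact h1.integral_prod_right'
  -- pointwise bound
  have pw : ∀ x, (‖F x‖₊ : ℝ≥0∞) ≤ ∫⁻ y, K (x - y) * ‖h y‖₊ ∂μ := by
    intro x
    refine (enorm_integral_le_lintegral_enorm _).trans (lintegral_mono fun y => ?_)
    have e1 : ‖G (x - y) * (c x - c y) * h y‖ₑ
        = ENNReal.ofReal (|G (x - y)| * |c x - c y| * |h y|) := by
      rw [Real.enorm_eq_ofReal_abs]
      congr 1
      rw [abs_mul, abs_mul]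
    have e2 : K (x - y) * (‖h y‖₊ : ℝ≥0∞)
        = ENNReal.ofReal ((M * (‖x - y‖ * |G (x - y)|)) * |h y|) := by
      rw [← enorm_eq_nnnorm, Real.enorm_eq_ofReal_abs, hK, ← ENNReal.ofReal_mul (by positivity)]
    rw [e1, e2]
    apply ENNReal.ofReal_le_ofReal
    have h1 := hc x y
    have h2 : (0:ℝ) ≤ |G (x - y)| := abs_nonneg _
    have h3 : (0:ℝ) ≤ |h y| := abs_nonneg _
    calc |G (x - y)| * |c x - c y| * |h y|
        ≤ |G (x - y)| * (M * ‖x - y‖) * |h y| :=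
          mul_le_mul_of_nonneg_right (mul_le_mul_of_nonneg_left h1 h2) h3
      _ = M * (‖x - y‖ * |G (x - y)|) * |h y| := by ring
  -- translation invariance
  have htrans : ∀ x : EuclideanSpace ℝ (Fin d), ∫⁻ y, K (x - y) ∂μ = IK := by
    intro x
    have e : (fun y => K (x - y)) = fun y => (fun w => K (-w)) (y - x) := by
      funext y; simp [neg_sub]
    rw [e, lintegral_sub_right_eq_self (fun w => K (-w)) x]
    exact (Measure.measurePreserving_neg μ).lintegral_comp hKmeas
  have htrans' : ∀ y : EuclideanSpace ℝ (Fin d), ∫⁻ x, K (x - y) ∂μ = IK := fun y =>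
    lintegral_sub_right_eq_self K y
  -- Cauchy-Schwarz at each x
  have CS : ∀ x : EuclideanSpace ℝ (Fin d), (∫⁻ y, K (x - y) * ‖h y‖₊ ∂μ)
      ≤ IK ^ (1/2 : ℝ) * (∫⁻ y, K (x - y) * (‖h y‖₊ : ℝ≥0∞) ^ (2:ℝ) ∂μ) ^ (1/2 : ℝ) := by
    intro x
    have hconj : Real.HolderConjugate 2 2 := Real.HolderConjugate.two_two
    have hm1 : AEMeasurable (fun y => (K (x - y)) ^ (1/2 : ℝ)) μ :=
      ((hKmeas.comp (measurable_const.sub measurable_id)).pow_const _).aemeasurable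
    have hm2 : AEMeasurable (fun y => (K (x - y)) ^ (1/2 : ℝ) * (‖h y‖₊ : ℝ≥0∞)) μ :=
      hm1.mul hh.1.enorm
    have key := ENNReal.lintegral_mul_le_Lp_mul_Lq μ hconj hm1 hm2
    have e0 : ∀ y, (K (x - y)) ^ (1/2 : ℝ) * ((K (x - y)) ^ (1/2 : ℝ) * (‖h y‖₊ : ℝ≥0∞))
        = K (x - y) * ‖h y‖₊ := by
      intro y
      rw [← mul_assoc, ← ENNReal.rpow_add_of_nonneg _ _ (by norm_num) (by norm_num)]
      norm_num
    have e1 : ∀ y, ((K (x - y)) ^ (1/2 : ℝ)) ^ (2:ℝ) = K (x - y) := by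
      intro y; rw [← ENNReal.rpow_mul]; norm_num
    have e2 : ∀ y, ((K (x - y)) ^ (1/2 : ℝ) * (‖h y‖₊ : ℝ≥0∞)) ^ (2:ℝ)
        = K (x - y) * (‖h y‖₊ : ℝ≥0∞) ^ (2:ℝ) := by
      intro y
      rw [ENNReal.mul_rpow_of_nonneg _ _ (by norm_num), ← ENNReal.rpow_mul]
      norm_num
    calc (∫⁻ y, K (x - y) * ‖h y‖₊ ∂μ)
        = ∫⁻ y, (K (x - y)) ^ (1/2 : ℝ) * ((K (x - y)) ^ (1/2 : ℝ) * (‖h y‖₊ : ℝ≥0∞)) ∂μ := by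
          simp_rw [e0]
      _ ≤ (∫⁻ y, ((K (x - y)) ^ (1/2 : ℝ)) ^ (2:ℝ) ∂μ) ^ (1/2:ℝ)
            * (∫⁻ y, ((K (x - y)) ^ (1/2 : ℝ) * (‖h y‖₊ : ℝ≥0∞)) ^ (2:ℝ) ∂μ) ^ (1/2:ℝ) := by
          simpa using key
      _ = IK ^ (1/2:ℝ) * (∫⁻ y, K (x - y) * (‖h y‖₊ : ℝ≥0∞) ^ (2:ℝ) ∂μ) ^ (1/2:ℝ) := by
          simp_rw [e1, e2, htrans x]
  -- main lintegral bound
  have main : (∫⁻ x, (‖F x‖₊ : ℝ≥0∞) ^ (2:ℝ) ∂μ)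
      ≤ IK ^ (2:ℝ) * ∫⁻ y, (‖h y‖₊ : ℝ≥0∞) ^ (2:ℝ) ∂μ := by
    have step : ∀ x, (‖F x‖₊ : ℝ≥0∞) ^ (2:ℝ)
        ≤ IK * ∫⁻ y, K (x - y) * (‖h y‖₊ : ℝ≥0∞) ^ (2:ℝ) ∂μ := by
      intro x
      calc (‖F x‖₊ : ℝ≥0∞) ^ (2:ℝ)
          ≤ (IK ^ (1/2:ℝ) * (∫⁻ y, K (x - y) * (‖h y‖₊ : ℝ≥0∞) ^ (2:ℝ) ∂μ) ^ (1/2:ℝ)) ^ (2:ℝ) :=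
            ENNReal.rpow_le_rpow ((pw x).trans (CS x)) (by norm_num)
        _ = IK * ∫⁻ y, K (x - y) * (‖h y‖₊ : ℝ≥0∞) ^ (2:ℝ) ∂μ := by
            rw [ENNReal.mul_rpow_of_nonneg _ _ (by norm_num), ← ENNReal.rpow_mul,
              ← ENNReal.rpow_mul]
            norm_num
    calc (∫⁻ x, (‖F x‖₊ : ℝ≥0∞) ^ (2:ℝ) ∂μ)
        ≤ ∫⁻ x, IK * ∫⁻ y, K (x - y) * (‖h y‖₊ : ℝ≥0∞) ^ (2:ℝ) ∂μ ∂μ := lintegral_mono step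
      _ = IK * ∫⁻ x, ∫⁻ y, K (x - y) * (‖h y‖₊ : ℝ≥0∞) ^ (2:ℝ) ∂μ ∂μ := lintegral_const_mul' _ _ hIKlt.ne
      _ = IK * ∫⁻ y, ∫⁻ x, K (x - y) * (‖h y‖₊ : ℝ≥0∞) ^ (2:ℝ) ∂μ ∂μ := by
          congr 1
          refine lintegral_lintegral_swap ?_
          exact ((hKmeas.comp (measurable_fst.sub measurable_snd)).aemeasurable.mul
            (hh.1.comp_snd.enorm.pow_const _))
      _ = IK * ∫⁻ y, (‖h y‖₊ : ℝ≥0∞) ^ (2:ℝ) * ∫⁻ x, K (x - y) ∂μ ∂μ := by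
          congr 1; refine lintegral_congr fun y => ?_
          rw [← lintegral_const_mul' _ _
            (ENNReal.rpow_ne_top_of_nonneg (by norm_num) ENNReal.coe_ne_top)]
          exact lintegral_congr fun x => mul_comm _ _
      _ = IK ^ (2:ℝ) * ∫⁻ y, (‖h y‖₊ : ℝ≥0∞) ^ (2:ℝ) ∂μ := by
          simp_rw [htrans']
          rw [lintegral_mul_const' _ _ hIKlt.ne]
          have h2 : IK ^ (2:ℝ) = IK * IK := by
            rw [show (2:ℝ) = ((2:ℕ):ℝ) by norm_num, ENNReal.rpow_natCast]; ring
          rw [h2]; ring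
  -- conclude
  have hsn : eLpNorm F 2 μ ≤ IK * eLpNorm h 2 μ := by
    rw [eLpNorm_eq_lintegral_rpow_enorm_toReal (by norm_num) (by norm_num),
        eLpNorm_eq_lintegral_rpow_enorm_toReal (by norm_num) (by norm_num)]
    simp only [ENNReal.toReal_ofNat]
    calc (∫⁻ x, (‖F x‖₊ : ℝ≥0∞) ^ (2:ℝ) ∂μ) ^ (1/2:ℝ)
        ≤ (IK ^ (2:ℝ) * ∫⁻ y, (‖h y‖₊ : ℝ≥0∞) ^ (2:ℝ) ∂μ) ^ (1/2:ℝ) :=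
          ENNReal.rpow_le_rpow main (by norm_num)
      _ = IK * (∫⁻ y, (‖h y‖₊ : ℝ≥0∞) ^ (2:ℝ) ∂μ) ^ (1/2:ℝ) := by
          rw [ENNReal.mul_rpow_of_nonneg _ _ (by norm_num), ← ENNReal.rpow_mul]
          norm_num
  refine ⟨⟨hFm, ?_⟩, by rwa [hIK] at hsn⟩
  exact lt_of_le_of_lt hsn (ENNReal.mul_lt_top hIKlt hh.2)
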